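/- Let n ≥ 2 and γ ∈ (0,1). Suppose either (1) G is an n×n real matrix with nonnegative entries, zero diagonal, and row sums equal to 1, r ∈ (0,1), G̃ = r·G, c = (I − γ·G̃)⁻¹ 𝟙, and d_i = r·Σ_{j≠i} G j i; or (2) r_1, …, r_n ∈ (0,1), G̃ is the n×n matrix with zero diagonal and off-diagonal entries G̃ i j = r_i/(n−1), c = (I − γ·G̃)⁻¹ 𝟙, and d_i = (Σ_{j≠i} r_j)/(n−1). Then in either case Σ_{i=1}^{n} c_i·( (1 − d_i)·c_i + 2·d_i ) > 0. -/

import Mathlib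

open Matrix Finset

/-- With homogeneous coordination intensity on a row-stochastic network
(case 1), or homogeneous interaction direction `g_ij = 1/(n-1)` with heterogeneous
intensities (case 2), the welfare expression `Σ_i c_i ((1 - d_i) c_i + 2 d_i)` is
strictly positive. -/
theorem stmt8 (n : ℕ) (hn : 2 ≤ n) (γ : ℝ) (hγ : γ ∈ Set.Ioo (0 : ℝ) 1) :
    (∀ (G : Matrix (Fin n) (Fin n) ℝ) (r : ℝ),
      (∀ i j, 0 ≤ G i j) → (∀ i, G i i = 0) → (∀ i, ∑ j, G i j = 1) →
      r ∈ Set.Ioo (0 : ℝ) 1 →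
      ∀ (Gt : Matrix (Fin n) (Fin n) ℝ), Gt = r • G →
      ∀ (c : Fin n → ℝ), c = (1 - γ • Gt)⁻¹ *ᵥ (fun _ => 1) →
      ∀ (d : Fin n → ℝ), (∀ i, d i = r * ∑ j ∈ Finset.univ.erase i, G j i) →
      0 < ∑ i, c i * ((1 - d i) * c i + 2 * d i)) ∧
    (∀ (r : Fin n → ℝ), (∀ i, r i ∈ Set.Ioo (0 : ℝ) 1) →
      ∀ (Gt : Matrix (Fin n) (Fin n) ℝ),
      (∀ i, Gt i i = 0) → (∀ i j, i ≠ j → Gt i j = r i / (n - 1)) →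
      ∀ (c : Fin n → ℝ), c = (1 - γ • Gt)⁻¹ *ᵥ (fun _ => 1) →
      ∀ (d : Fin n → ℝ), (∀ i, d i = (∑ j ∈ Finset.univ.erase i, r j) / (n - 1)) →
      0 < ∑ i, c i * ((1 - d i) * c i + 2 * d i)) := by
  obtain ⟨hγ0, hγ1⟩ := hγ
  have hn0 : (0:ℝ) < n := by positivity
  have hn2 : (2:ℝ) ≤ n := by exact_mod_cast hn
  constructor
  · intro G r hGpos hGdiag hGrow hr Gt hGt c hc d hd
    obtain ⟨hr0, hr1⟩ := hr
    set A : Matrix (Fin n) (Fin n) ℝ := 1 - γ • Gt with hA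
    have hAij : ∀ i j, A i j = (if i = j then 1 else 0) - γ * (r * G i j) := by
      intro i j
      simp [hA, hGt, Matrix.one_apply, Matrix.sub_apply, Matrix.smul_apply, mul_assoc]
    have hγr : γ * r < 1 := by nlinarith
    have hdet : A.det ≠ 0 := by
      apply det_ne_zero_of_sum_row_lt_diag
      intro k
      have h1 : A k k = 1 := by rw [hAij]; simp [hGdiag k]
      have h2 : ∑ j ∈ Finset.univ.erase k, ‖A k j‖ = γ * r * ∑ j ∈ Finset.univ.erase k, G k j := by
        rw [Finset.mul_sum]
        refine Finset.sum_congr rfl fun j hj => ?_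
        have hjk : k ≠ j := fun h => (Finset.mem_erase.mp hj).1 h.symm
        rw [hAij]
        simp only [if_neg hjk]
        rw [Real.norm_eq_abs, zero_sub, abs_neg,
          abs_of_nonneg (by have := hGpos k j; positivity), mul_assoc]
      have h3 : ∑ j ∈ Finset.univ.erase k, G k j = 1 := by
        rw [Finset.sum_erase _ (hGdiag k), hGrow k]
      rw [h1, h2, h3, mul_one]
      simpa using hγr
    have hunit : IsUnit A.det := isUnit_iff_ne_zero.mpr hdet
    set k : ℝ := (1 - γ * r)⁻¹ with hk
    have h1γr : (0:ℝ) < 1 - γ * r := by linarith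
    have hk0 : 0 < k := by positivity
    have hkk : k * (1 - γ * r) = 1 := inv_mul_cancel₀ (ne_of_gt h1γr)
    have hAk : A *ᵥ (fun _ => k) = fun _ => 1 := by
      funext i
      have hrow : ∑ j, A i j = 1 - γ * r := by
        simp only [hAij]
        rw [Finset.sum_sub_distrib]
        rw [← Finset.mul_sum, ← Finset.mul_sum, hGrow i]
        simp
      simp only [Matrix.mulVec, dotProduct]
      calc ∑ j, A i j * k = (∑ j, A i j) * k := by rw [Finset.sum_mul]
        _ = 1 := by rw [hrow, mul_comm]; exact hkk
    have hck : ∀ i, c i = k := by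
      intro i
      have h : c = A⁻¹ *ᵥ (A *ᵥ fun _ => k) := by rw [hAk]; exact hc
      rw [Matrix.mulVec_mulVec, Matrix.nonsing_inv_mul A hunit, Matrix.one_mulVec] at h
      rw [h]
    have hdsum : ∑ i, d i = r * n := by
      have : ∑ i, ∑ j ∈ Finset.univ.erase i, G j i = (n:ℝ) := by
        have e1 : ∀ i : Fin n, ∑ j ∈ Finset.univ.erase i, G j i = ∑ j, G j i := by
          intro i; exact Finset.sum_erase _ (hGdiag i)
        rw [Finset.sum_congr rfl fun i _ => e1 i, Finset.sum_comm]
        rw [Finset.sum_congr rfl fun j _ => hGrow j]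
        simp
      calc ∑ i, d i = ∑ i, r * ∑ j ∈ Finset.univ.erase i, G j i :=
            Finset.sum_congr rfl fun i _ => hd i
        _ = r * ∑ i, ∑ j ∈ Finset.univ.erase i, G j i := by rw [Finset.mul_sum]
        _ = r * n := by rw [this]
    have hsum : ∑ i, c i * ((1 - d i) * c i + 2 * d i)
        = (n:ℝ) * k ^ 2 + (2 * k - k ^ 2) * (r * n) := by
      calc ∑ i, c i * ((1 - d i) * c i + 2 * d i)
          = ∑ i, (k ^ 2 + (2 * k - k ^ 2) * d i) := by
            refine Finset.sum_congr rfl fun i _ => ?_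
            rw [hck i]; ring
        _ = (n:ℝ) * k ^ 2 + (2 * k - k ^ 2) * ∑ i, d i := by
            rw [Finset.sum_add_distrib, Finset.sum_const, ← Finset.mul_sum]
            simp [nsmul_eq_mul]
        _ = _ := by rw [hdsum]
    rw [hsum]
    have key : (n:ℝ) * k ^ 2 + (2 * k - k ^ 2) * (r * n)
        = (n:ℝ) * (k * (k * (1 - r) + 2 * r)) := by ring
    rw [key]
    have hq : 0 < k * (1 - r) + 2 * r := by nlinarith
    exact mul_pos hn0 (mul_pos hk0 hq)
  · intro r hr Gt hdiag hoff c hc d hd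
    set m : ℝ := (n:ℝ) - 1 with hm
    have hm0 : (0:ℝ) < m := by simp only [hm]; linarith
    have hcard : ∀ i : Fin n, ((Finset.univ.erase i).card : ℝ) = m := by
      intro i
      rw [Finset.card_erase_of_mem (Finset.mem_univ i), Finset.card_univ, Fintype.card_fin]
      rw [Nat.cast_sub (by omega)]
      simp [hm]
    set α : Fin n → ℝ := fun i => γ * r i / m with hα
    have hα0 : ∀ i, 0 < α i := fun i => by
      have := (hr i).1; simp only [hα]; positivity
    have hαm : ∀ i, m * α i < 1 := by
      intro i
      have h1 := (hr i).1
      have h2 := (hr i).2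
      have : m * α i = γ * r i := by simp only [hα]; field_simp [ne_of_gt hm0]
      rw [this]; nlinarith
    set A : Matrix (Fin n) (Fin n) ℝ := 1 - γ • Gt with hA
    have hAii : ∀ i, A i i = 1 := by
      intro i; simp [hA, Matrix.one_apply, Matrix.sub_apply, Matrix.smul_apply, hdiag i]
    have hAij : ∀ i j, i ≠ j → A i j = -(α i) := by
      intro i j hij
      simp only [hA, Matrix.sub_apply, Matrix.smul_apply, Matrix.one_apply, if_neg hij,
        hoff i j hij, smul_eq_mul]
      simp only [hα]
      ring
    have hdet : A.det ≠ 0 := by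
      apply det_ne_zero_of_sum_row_lt_diag
      intro k
      have h2 : ∑ j ∈ Finset.univ.erase k, ‖A k j‖ = m * α k := by
        rw [Finset.sum_congr rfl (fun j hj => by
          have hjk : k ≠ j := fun h => (Finset.mem_erase.mp hj).1 h.symm
          rw [hAij k j hjk, Real.norm_eq_abs, abs_neg, abs_of_nonneg (le_of_lt (hα0 k))])]
        rw [Finset.sum_const, nsmul_eq_mul, hcard k]
      rw [h2, hAii k, norm_one]
      exact hαm k
    have hunit : IsUnit A.det := isUnit_iff_ne_zero.mpr hdet
    have hAc : A *ᵥ c = fun _ => 1 := by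
      rw [hc, Matrix.mulVec_mulVec, Matrix.mul_nonsing_inv A hunit, Matrix.one_mulVec]
    obtain ⟨S, hS⟩ : ∃ S : ℝ, S = ∑ i, c i := ⟨_, rfl⟩
    have heq : ∀ i, c i * (1 + α i) = 1 + α i * S := by
      intro i
      have h1 : ∑ j, A i j * c j = 1 := congrFun hAc i
      have h2 : ∑ j ∈ Finset.univ.erase i, A i j * c j
          = -(α i) * (S - c i) := by
        rw [Finset.sum_congr rfl (fun j hj => by
          have hij : i ≠ j := fun h => (Finset.mem_erase.mp hj).1 h.symm
          rw [hAij i j hij]), ← Finset.mul_sum,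
          Finset.sum_erase_eq_sub (Finset.mem_univ i), hS]
      have h3 : ∑ j ∈ Finset.univ.erase i, A i j * c j
          = (∑ j, A i j * c j) - A i i * c i :=
        Finset.sum_erase_eq_sub (Finset.mem_univ i)
      rw [h1, h2, hAii i] at h3
      nlinarith [h3]
    have hα1 : ∀ i, (0:ℝ) < 1 + α i := fun i => by have := hα0 i; linarith
    have hci : ∀ i, c i = 1 / (1 + α i) + (α i / (1 + α i)) * S := by
      intro i
      have h1 := hα1 i
      have h : c i = (1 + α i * S) / (1 + α i) := by
        rw [eq_div_iff (ne_of_gt h1)]; exact heq i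
      rw [h]
      field_simp
    obtain ⟨T, hT⟩ : ∃ T : ℝ, T = ∑ i, α i / (1 + α i) := ⟨_, rfl⟩
    obtain ⟨U, hU⟩ : ∃ U : ℝ, U = ∑ i, 1 / (1 + α i) := ⟨_, rfl⟩
    have hSTU : S = U + T * S := by
      rw [hT, hU, Finset.sum_mul, ← Finset.sum_add_distrib]
      conv_lhs => rw [hS]
      exact Finset.sum_congr rfl fun i _ => hci i
    have hU0 : 0 < U := by
      rw [hU]
      exact Finset.sum_pos (fun i _ => div_pos one_pos (hα1 i)) ⟨⟨0, by omega⟩, Finset.mem_univ _⟩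
    have hT1 : T < 1 := by
      have hterm : ∀ i, α i / (1 + α i) < 1 / n := by
        intro i
        rw [div_lt_div_iff₀ (hα1 i) hn0]
        have := hαm i
        have : α i * n = m * α i + α i := by rw [hm]; ring
        rw [this]
        have := hα0 i
        linarith [hαm i]
      rw [hT]
      calc (∑ i, α i / (1 + α i)) < ∑ _i : Fin n, 1 / (n:ℝ) :=
            Finset.sum_lt_sum_of_nonempty ⟨⟨0, by omega⟩, Finset.mem_univ _⟩
              (fun i _ => hterm i)
        _ = 1 := by
            rw [Finset.sum_const, nsmul_eq_mul, Finset.card_univ, Fintype.card_fin]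
            field_simp
    have hS0 : 0 < S := by
      have h1T : 0 < 1 - T := by linarith
      have : S * (1 - T) = U := by linarith [hSTU]
      have hSe : S = U / (1 - T) := by
        field_simp at this ⊢
        linarith
      rw [hSe]; positivity
    have hc0 : ∀ i, 0 < c i := by
      intro i
      rw [hci i]
      have := hα0 i
      have := hα1 i
      positivity
    have hd01 : ∀ i, 0 < d i ∧ d i < 1 := by
      intro i
      have hne : (Finset.univ.erase i).Nonempty := by
        rw [← Finset.card_pos, Finset.card_erase_of_mem (Finset.mem_univ i),
          Finset.card_univ, Fintype.card_fin]
        omega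
      have hnum0 : 0 < ∑ j ∈ Finset.univ.erase i, r j :=
        Finset.sum_pos (fun j _ => (hr j).1) hne
      have hnum1 : ∑ j ∈ Finset.univ.erase i, r j < m := by
        calc ∑ j ∈ Finset.univ.erase i, r j < ∑ _j ∈ Finset.univ.erase i, (1:ℝ) :=
              Finset.sum_lt_sum_of_nonempty hne (fun j _ => (hr j).2)
          _ = m := by rw [Finset.sum_const, nsmul_eq_mul, mul_one, hcard i]
      rw [hd i]
      constructor
      · positivity
      · rw [div_lt_one hm0]; exact hnum1
    apply Finset.sum_pos _ ⟨⟨0, by omega⟩, Finset.mem_univ _⟩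
    intro i _
    obtain ⟨hd0, hd1⟩ := hd01 i
    have hci0 := hc0 i
    have h2 : 0 < (1 - d i) * c i + 2 * d i := by nlinarith
    exact mul_pos hci0 h2
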